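/- arXiv:1704.02051 — 4 statements merged into one kernel-verified Lean document; each statement's English description precedes it below -/
import Mathlib

section
/- Let R = (S,T,s,t,r) be a reaction network with rates, with mass-action vector field v^R(c) = Σ_{τ ∈ T} r(τ)·(t(τ) − s(τ))·c^{s(τ)} on ℝ^S, where complexes t(τ), s(τ) ∈ ℕ^S are viewed in ℝ^S. Let f : S → S' be a function between finite sets and let R' = (S', T, f_*(s), f_*(t), r) be the pushed-forward reaction network with rates. Then v^{R'} = f_* ∘ v^R ∘ f^*, where f_* and f^* are the linear pushforward and pullback maps between ℝ^S and ℝ^{S'}. -/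
/-- Pushforward of real-valued functions along a map of finite sets (fiberwise sum). -/
def pushR {S S' : Type*} [Fintype S] [DecidableEq S'] (f : S → S') (c : S → ℝ) : S' → ℝ :=
  fun σ' => ∑ σ : S, if f σ = σ' then c σ else 0

/-- Pullback of real-valued functions. -/
def pullR {S S' : Type*} (f : S → S') (c : S' → ℝ) : S → ℝ := c ∘ f

/-- Pushforward of an `ℕ`-valued complex along a map of finite sets. -/
def pushN {S S' : Type*} [Fintype S] [DecidableEq S'] (f : S → S') (κ : S → ℕ) : S' → ℕ :=
  fun σ' => ∑ σ : S, if f σ = σ' then κ σ else 0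

/-- The mass-action vector field `v^R(c) = ∑_τ r(τ)·(t(τ) − s(τ))·c^{s(τ)}`. -/
def massAction {S T : Type*} [Fintype S] [Fintype T] (s t : T → S → ℕ) (r : T → ℝ) :
    (S → ℝ) → (S → ℝ) :=
  fun c σ => ∑ τ : T, r τ * ((t τ σ : ℝ) - (s τ σ : ℝ)) * ∏ σ'' : S, c σ'' ^ s τ σ''

lemma prod_pushN {S S' : Type*} [Fintype S] [Fintype S'] [DecidableEq S']
    (f : S → S') (κ : S → ℕ) (c : S' → ℝ) :
    ∏ σ' : S', c σ' ^ pushN f κ σ' = ∏ σ : S, c (f σ) ^ κ σ := by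
  simp only [pushN, ← Finset.prod_pow_eq_pow_sum]
  rw [Finset.prod_comm]
  refine Finset.prod_congr rfl fun σ _ => ?_
  rw [Finset.prod_congr rfl (fun σ' _ => pow_ite (f σ = σ') (c σ') (κ σ) 0)]
  simp

/-- For a reaction network with rates `R = (S,T,s,t,r)` and `f : S → S'`, the mass-action
vector field of the pushed-forward network `R' = (S', T, f_*(s), f_*(t), r)` is
`v^{R'} = f_* ∘ v^R ∘ f^*`. -/
theorem massAction_pushforward {S S' T : Type*} [Fintype S] [Fintype S'] [Fintype T]
    [DecidableEq S'] (s t : T → S → ℕ) (r : T → ℝ) (hr : ∀ τ, 0 < r τ) (f : S → S') :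
    massAction (fun τ => pushN f (s τ)) (fun τ => pushN f (t τ)) r
      = fun c => pushR f (massAction s t r (pullR f c)) := by
  funext c σ'
  simp only [massAction, pushR, pullR, Function.comp]
  have h : ∀ x : S, (if f x = σ' then ∑ τ : T, r τ * ((t τ x : ℝ) - (s τ x : ℝ)) * ∏ σ'' : S, c (f σ'') ^ s τ σ'' else 0)
      = ∑ τ : T, if f x = σ' then r τ * ((t τ x : ℝ) - (s τ x : ℝ)) * ∏ σ'' : S, c (f σ'') ^ s τ σ'' else 0 := by
    intro x; split <;> simp
  simp only [h]
  rw [Finset.sum_comm]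
  refine Finset.sum_congr rfl fun τ _ => ?_
  rw [prod_pushN]
  simp only [pushN, Nat.cast_sum, apply_ite (Nat.cast : ℕ → ℝ), Nat.cast_zero,
    ← Finset.sum_sub_distrib, Finset.mul_sum, Finset.sum_mul]
  refine Finset.sum_congr rfl fun x _ => ?_
  split <;> simp
end

section
/- The mass-action vector field of a disjoint union of two reaction networks with rates decomposes: if R is a reaction network with rates on S and R' is one on S', and R + R' denotes their disjoint union on S + S' (with transitions T + T', sources and targets extended by zero on the other summand, and rates combined), then v^{R+R'} = i_* ∘ v^R ∘ i^* + i'_* ∘ v^{R'} ∘ i'^*, where i : S → S+S' and i' : S' → S+S' are the inclusions. -/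
/-- The mass-action vector field of a disjoint union of reaction networks with rates
decomposes: `v^{R+R'} = i_* ∘ v^R ∘ i^* + i'_* ∘ v^{R'} ∘ i'^*` for the inclusions
`i : S → S ⊕ S'` and `i' : S' → S ⊕ S'`. -/
theorem massAction_disjoint_union {S S' T T' : Type*}
    [Fintype S] [Fintype S'] [Fintype T] [Fintype T'] [DecidableEq S] [DecidableEq S']
    (s t : T → S → ℕ) (r : T → ℝ) (s' t' : T' → S' → ℕ) (r' : T' → ℝ)
    (hr : ∀ τ, 0 < r τ) (hr' : ∀ τ', 0 < r' τ') :
    massAction (S := S ⊕ S') (T := T ⊕ T')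
      (Sum.elim (fun τ => Sum.elim (s τ) (fun _ => 0))
                (fun τ' => Sum.elim (fun _ => 0) (s' τ')))
      (Sum.elim (fun τ => Sum.elim (t τ) (fun _ => 0))
                (fun τ' => Sum.elim (fun _ => 0) (t' τ')))
      (Sum.elim r r')
    = fun c => pushR Sum.inl (massAction s t r (pullR Sum.inl c))
             + pushR Sum.inr (massAction s' t' r' (pullR Sum.inr c)) := by
  funext c x
  cases x with
  | inl σ =>
      simp [massAction, pushR, pullR, Fintype.sum_sum_type, Fintype.prod_sum_type]
  | inr σ' =>
      simp [massAction, pushR, pullR, Fintype.sum_sum_type, Fintype.prod_sum_type]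
end

section
/- Gluing of steady states: let (X →ⁱ S ←ᵒ Y, v) and (Y →^{i'} S' ←^{o'} Z, v') be open dynamical systems, with pushout S+_Y S' and canonical maps j, j'. Suppose c ∈ ℝ^S satisfies v(c) + i_*(I) − o_*(O) = 0 and c' ∈ ℝ^{S'} satisfies v'(c') + i'_*(O) − o'_*(O') = 0, and that o^*(c) = i'^*(c'). Then there is a unique b ∈ ℝ^{S+_Y S'} with j^*(b) = c and j'^*(b) = c', and it satisfies u(b) + (j∘i)_*(I) − (j'∘o')_*(O') = 0, where u = j_* ∘ v ∘ j^* + j'_* ∘ v' ∘ j'^*. -/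
lemma pushR_comp {A B C : Type*} [Fintype A] [Fintype B] [DecidableEq B] [DecidableEq C]
    (f : A → B) (g : B → C) (c : A → ℝ) :
    pushR g (pushR f c) = pushR (g ∘ f) c := by
  funext p
  simp only [pushR, Function.comp]
  have step : ∀ x : B, (if g x = p then ∑ σ : A, if f σ = x then c σ else 0 else 0)
      = ∑ σ : A, if g x = p then (if f σ = x then c σ else 0) else 0 := by
    intro x; split <;> simp
  simp only [step]
  rw [Finset.sum_comm]
  refine Finset.sum_congr rfl fun a _ => ?_
  have h2 : ∀ x : B, (if g x = p then if f a = x then c a else 0 else 0)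
      = if f a = x then (if g x = p then c a else 0) else 0 := by
    intro x; split <;> split <;> simp_all
  simp only [h2, Finset.sum_ite_eq]
  simp

lemma pushR_add {A B : Type*} [Fintype A] [DecidableEq B] (f : A → B) (c d : A → ℝ) :
    pushR f (c + d) = pushR f c + pushR f d := by
  funext p
  simp only [pushR, Pi.add_apply, ← Finset.sum_add_distrib]
  refine Finset.sum_congr rfl fun a _ => ?_
  split <;> simp

lemma pushR_sub {A B : Type*} [Fintype A] [DecidableEq B] (f : A → B) (c d : A → ℝ) :
    pushR f (c - d) = pushR f c - pushR f d := by
  funext p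
  simp only [pushR, Pi.sub_apply, ← Finset.sum_sub_distrib]
  refine Finset.sum_congr rfl fun a _ => ?_
  split <;> simp

lemma pushR_zero {A B : Type*} [Fintype A] [DecidableEq B] (f : A → B) :
    pushR f (0 : A → ℝ) = 0 := by
  funext p; simp [pushR]

/-- Gluing of steady states: given open dynamical systems `(X →ⁱ S ←ᵒ Y, v)` and
`(Y →^{i'} S' ←^{o'} Z, v')`, a pushout `P = S +_Y S'` with maps `j, j'`, steady states
`c` of the first (inflows `I`, outflows `O`) and `c'` of the second (inflows `O`,
outflows `O'`) agreeing on `Y`, there is a unique `b ∈ ℝ^P` with `j^*(b) = c` and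
`j'^*(b) = c'`, and any such `b` satisfies
`u(b) + (j∘i)_*(I) − (j'∘o')_*(O') = 0` where `u = j_* ∘ v ∘ j^* + j'_* ∘ v' ∘ j'^*`. -/
theorem glue_steady_states {X Y Z S S' P : Type*}
    [Fintype X] [Fintype Y] [Fintype Z] [Fintype S] [Fintype S'] [Fintype P]
    [DecidableEq S] [DecidableEq S'] [DecidableEq P]
    (i : X → S) (o : Y → S) (i' : Y → S') (o' : Z → S')
    (j : S → P) (j' : S' → P)
    (hcomm : j ∘ o = j' ∘ i')
    (huniv : ∀ {W : Type} (u : S → W) (u' : S' → W), u ∘ o = u' ∘ i' →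
      ∃! w : P → W, w ∘ j = u ∧ w ∘ j' = u')
    (v : (S → ℝ) → (S → ℝ)) (v' : (S' → ℝ) → (S' → ℝ))
    (c : S → ℝ) (c' : S' → ℝ) (I : X → ℝ) (O : Y → ℝ) (O' : Z → ℝ)
    (hc : v c + pushR i I - pushR o O = 0)
    (hc' : v' c' + pushR i' O - pushR o' O' = 0)
    (hagree : c ∘ o = c' ∘ i') :
    (∃! b : P → ℝ, b ∘ j = c ∧ b ∘ j' = c') ∧
    (∀ b : P → ℝ, b ∘ j = c → b ∘ j' = c' →
      (pushR j (v (b ∘ j)) + pushR j' (v' (b ∘ j')))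
        + pushR (j ∘ i) I - pushR (j' ∘ o') O' = 0) := by
  constructor
  · exact huniv c c' hagree
  · intro b hb hb'
    rw [hb, hb']
    have key : pushR j (pushR o O) = pushR j' (pushR i' O) := by
      rw [pushR_comp, pushR_comp, hcomm]
    have h1 := congrArg (pushR j) hc
    have h2 := congrArg (pushR j') hc'
    rw [pushR_sub, pushR_add, pushR_zero] at h1 h2
    rw [← pushR_comp i j, ← pushR_comp o' j']
    have := congrArg₂ (· + ·) h1 h2
    linear_combination this + congrArg (fun x => x - pushR j' (pushR i' O)) key
end

section
/- Equivalence of decorated cospans is an equivalence relation, and composition of decorated cospans is well-defined on equivalence classes: if (X →ⁱ S ←ᵒ Y, d) is equivalent to (X →^{i₁} S₁ ←^{o₁} Y, d₁) via an isomorphism f : S → S₁ with F(f)(d) = d₁, f∘i = i₁, f∘o = o₁, and similarly for a second pair of decorated cospans from Y to Z, then the composites (formed via pushouts and the lax monoidal structure of F) are equivalent. -/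
open CategoryTheory Limits

/-- An `F`-decorated cospan from `X` to `Y`: a cospan `X → S ← Y` in `C` together with a
decoration `d ∈ F(S)`. -/
structure DecCospan {C : Type*} [Category C] (F : C ⥤ Type*) (X Y : C) where
  apex : C
  i : X ⟶ apex
  o : Y ⟶ apex
  dec : F.obj apex

/-- Two decorated cospans are equivalent if there is an isomorphism of apexes commuting
with the legs and carrying one decoration to the other. -/
def DecEquiv {C : Type*} [Category C] {F : C ⥤ Type*} {X Y : C}
    (a b : DecCospan F X Y) : Prop :=
  ∃ f : a.apex ≅ b.apex, a.i ≫ f.hom = b.i ∧ a.o ≫ f.hom = b.o ∧ F.map f.hom a.dec = b.dec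

/-- The composite of decorated cospans, glued along a pushout and decorated using the lax
monoidal structure map `φ` followed by `F([j,j'])`. -/
noncomputable def DecComp {C : Type*} [Category C] [HasFiniteColimits C] {F : C ⥤ Type*}
    (φ : ∀ A B : C, F.obj A × F.obj B → F.obj (A ⨿ B))
    {X Y Z : C} (a : DecCospan F X Y) (b : DecCospan F Y Z) : DecCospan F X Z where
  apex := pushout a.o b.i
  i := a.i ≫ pushout.inl a.o b.i
  o := b.o ≫ pushout.inr a.o b.i
  dec := F.map (coprod.desc (pushout.inl a.o b.i) (pushout.inr a.o b.i))
    (φ a.apex b.apex (a.dec, b.dec))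

set_option maxHeartbeats 1000000 in
/-- Equivalence of decorated cospans is an equivalence relation, and composition of
decorated cospans is well-defined on equivalence classes: equivalent composable pairs have
equivalent composites.  Here `φ` is the lax monoidal structure map of `F`, assumed natural. -/
theorem decEquiv_equivalence_and_comp_well_defined
    {C : Type*} [Category C] [HasFiniteColimits C] {F : C ⥤ Type*}
    (φ : ∀ A B : C, F.obj A × F.obj B → F.obj (A ⨿ B))
    (hφ : ∀ {A B A' B' : C} (f : A ⟶ B) (f' : A' ⟶ B') (d : F.obj A) (d' : F.obj A'),
      F.map (coprod.map f f') (φ A A' (d, d')) = φ B B' (F.map f d, F.map f' d'))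
    (X Y Z : C) :
    Equivalence (DecEquiv (F := F) (X := X) (Y := Y)) ∧
    (∀ (a a₁ : DecCospan F X Y) (b b₁ : DecCospan F Y Z),
      DecEquiv a a₁ → DecEquiv b b₁ → DecEquiv (DecComp φ a b) (DecComp φ a₁ b₁)) := by
  constructor
  · constructor
    · intro a
      exact ⟨Iso.refl _, by simp, by simp, by simp⟩
    · rintro a b ⟨f, h1, h2, h3⟩
      refine ⟨f.symm, ?_, ?_, ?_⟩
      · rw [← h1]; simp
      · rw [← h2]; simp
      · rw [← h3, ← FunctorToTypes.map_comp_apply]; simp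
    · rintro a b c ⟨f, h1, h2, h3⟩ ⟨g, g1, g2, g3⟩
      refine ⟨f ≪≫ g, ?_, ?_, ?_⟩
      · simp [reassoc_of% h1, g1]
      · simp [reassoc_of% h2, g2]
      · simp [FunctorToTypes.map_comp_apply, h3, g3]
  · rintro a a₁ b b₁ ⟨f, hf1, hf2, hf3⟩ ⟨g, hg1, hg2, hg3⟩
    have hcomm : a.o ≫ f.hom ≫ pushout.inl a₁.o b₁.i
        = b.i ≫ g.hom ≫ pushout.inr a₁.o b₁.i := by
      rw [reassoc_of% hf2, reassoc_of% hg1, pushout.condition]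
    have hcomm' : a₁.o ≫ f.inv ≫ pushout.inl a.o b.i
        = b₁.i ≫ g.inv ≫ pushout.inr a.o b.i := by
      rw [← hf2, ← hg1]; simp [pushout.condition]
    refine ⟨⟨pushout.desc (f.hom ≫ pushout.inl a₁.o b₁.i)
        (g.hom ≫ pushout.inr a₁.o b₁.i) hcomm,
        pushout.desc (f.inv ≫ pushout.inl a.o b.i)
        (g.inv ≫ pushout.inr a.o b.i) hcomm', ?_, ?_⟩, ?_, ?_, ?_⟩
    · apply pushout.hom_ext <;> simp [DecComp, pushout.inl_desc_assoc, pushout.inr_desc_assoc, pushout.inl_desc, pushout.inr_desc, Iso.hom_inv_id_assoc, Iso.inv_hom_id_assoc]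
    · apply pushout.hom_ext <;> simp [DecComp, pushout.inl_desc_assoc, pushout.inr_desc_assoc, pushout.inl_desc, pushout.inr_desc, Iso.hom_inv_id_assoc, Iso.inv_hom_id_assoc]
    · simp [DecComp, ← hf1, pushout.inl_desc_assoc, pushout.inr_desc_assoc, pushout.inl_desc, pushout.inr_desc, Iso.hom_inv_id_assoc, Iso.inv_hom_id_assoc]
    · simp [DecComp, ← hg2, pushout.inl_desc_assoc, pushout.inr_desc_assoc, pushout.inl_desc, pushout.inr_desc, Iso.hom_inv_id_assoc, Iso.inv_hom_id_assoc]
    · simp only [DecComp, ← FunctorToTypes.map_comp_apply]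
      rw [← hf3, ← hg3, ← hφ, ← FunctorToTypes.map_comp_apply]
      have heq : coprod.desc (pushout.inl a.o b.i) (pushout.inr a.o b.i) ≫
          pushout.desc (f.hom ≫ pushout.inl a₁.o b₁.i) (g.hom ≫ pushout.inr a₁.o b₁.i) hcomm
          = coprod.map f.hom g.hom ≫
            coprod.desc (pushout.inl a₁.o b₁.i) (pushout.inr a₁.o b₁.i) := by
        apply coprod.hom_ext <;> simp [coprod.inl_desc_assoc, coprod.inr_desc_assoc, coprod.inl_desc, coprod.inr_desc, coprod.inl_map_assoc, coprod.inr_map_assoc, pushout.inl_desc, pushout.inr_desc]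
      rw [← heq, Functor.map_comp]; rfl
end
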